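/- Fix q > 0 and a > 1, and let (X_i)_{i≥1} be independent, identically distributed positive random variables with 0 < E[X_1] < ∞ and E[X_1²] = ∞. Let A be the on/off process whose i-th cycle consists of an on-period of length X_i at rate a followed by an off-period of length F_i = max((a−1)X_i, (a−1)aX_i²/(2q) − X_i), and let T′_N = Σ_{i=1}^N (X_i + F_i). Then almost surely the time-average arrival rate tends to zero: (1/T′_N) ∫_0^{T′_N} A(u) du = a·(Σ_{i=1}^N X_i)/T′_N → 0 as N → ∞; equivalently, the fraction of time spent in on-periods tends to zero. -/

import Mathlib

open MeasureTheory ProbabilityTheory Filter Finset Set Topology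
open scoped ENNReal

lemma piecewise_const_integral (f : ℝ → ℝ) (k c d : ℝ) (hcd : c ≤ d)
    (h : ∀ t, c ≤ t → t < d → f t = k) :
    IntervalIntegrable f volume c d ∧ (∫ t in c..d, f t) = (d - c) * k := by
  have hne : ∀ᵐ t : ℝ ∂volume, t ≠ d := by
    rw [ae_iff]
    simpa using Real.volume_singleton
  have heq : ∀ᵐ t : ℝ ∂volume, t ∈ Set.uIoc c d → f t = k := by
    filter_upwards [hne] with t ht htm
    rw [Set.uIoc_of_le hcd] at htm
    exact h t htm.1.le (lt_of_le_of_ne htm.2 ht)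
  have heq' : f =ᵐ[volume.restrict (Set.uIoc c d)] fun _ => k := by
    filter_upwards [ae_restrict_of_ae heq, ae_restrict_mem measurableSet_uIoc] with t h1 h2
    exact h1 h2
  constructor
  · rw [intervalIntegrable_iff]
    refine (integrableOn_const ?_).congr heq'.symm
    rw [Set.uIoc_of_le hcd]
    exact measure_Ioc_lt_top.ne
  · rw [intervalIntegral.integral_congr_ae heq, intervalIntegral.integral_const,
      smul_eq_mul]

/-- If `X i` are iid with infinite second moment, then `(∑ Xᵢ²)/N → ∞` a.s. -/
lemma aux_sq {Ω : Type*} [MeasureSpace Ω] [IsProbabilityMeasure (ℙ : Measure Ω)]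
    (X : ℕ → Ω → ℝ) (hmeas : ∀ i, Measurable (X i))
    (hindep : iIndepFun X ℙ)
    (hident : ∀ i, IdentDistrib (X i) (X 0) ℙ ℙ)
    (hsq : ∫⁻ ω, ENNReal.ofReal ((X 0 ω) ^ 2) = ⊤) :
    ∀ᵐ ω ∂ℙ, Tendsto (fun N => (∑ i ∈ Finset.range N, (X i ω) ^ 2) / N) atTop atTop := by
  set g : ℕ → ℝ → ℝ := fun M x => min (x ^ 2) M with hg
  have hgmeas : ∀ M : ℕ, Measurable (g M) :=
    fun M => (measurable_id.pow_const 2).min measurable_const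
  have hg0 : ∀ M : ℕ, ∀ x : ℝ, 0 ≤ g M x :=
    fun M x => le_min (sq_nonneg x) (by positivity)
  have hgle : ∀ M : ℕ, ∀ x : ℝ, g M x ≤ (M : ℝ) := fun M x => min_le_right _ _
  -- integrability of the truncations
  have hint : ∀ M : ℕ, Integrable (fun ω => g M (X 0 ω)) ℙ := by
    intro M
    refine Integrable.mono' (integrable_const (M : ℝ))
      (((hgmeas M).comp (hmeas 0)).aestronglyMeasurable) (ae_of_all _ fun ω => ?_)
    rw [Real.norm_eq_abs, abs_of_nonneg (hg0 M _)]
    exact hgle M _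
  -- strong law for each truncation level
  have hslln : ∀ M : ℕ, ∀ᵐ ω ∂ℙ,
      Tendsto (fun n : ℕ => (∑ i ∈ Finset.range n, g M (X i ω)) / n) atTop
        (𝓝 (∫ ω, g M (X 0 ω) ∂ℙ)) := by
    intro M
    exact strong_law_ae_real (fun i ω => g M (X i ω)) (hint M)
      (fun i j hij => ((hindep.indepFun hij).comp (hgmeas M) (hgmeas M)))
      (fun i => (hident i).comp (hgmeas M))
  -- the truncated means tend to infinity
  have hmean : ∀ C : ℝ, ∃ M : ℕ, C < ∫ ω, g M (X 0 ω) ∂ℙ := by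
    intro C
    have hfm : ∀ M : ℕ, Measurable fun ω => ENNReal.ofReal (g M (X 0 ω)) :=
      fun M => ((hgmeas M).comp (hmeas 0)).ennreal_ofReal
    have hmono : Monotone fun M : ℕ => fun ω => ENNReal.ofReal (g M (X 0 ω)) := by
      intro M M' hMM'
      refine fun ω => ENNReal.ofReal_le_ofReal ?_
      exact min_le_min le_rfl (by exact_mod_cast hMM')
    have hsup : (⨆ M : ℕ, ∫⁻ ω, ENNReal.ofReal (g M (X 0 ω)) ∂ℙ) = ⊤ := by
      rw [← lintegral_iSup hfm hmono]
      rw [← hsq]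
      congr 1
      funext ω
      refine le_antisymm (iSup_le fun M => ENNReal.ofReal_le_ofReal (min_le_left _ _)) ?_
      have : ENNReal.ofReal ((X 0 ω) ^ 2) = ENNReal.ofReal (g ⌈(X 0 ω) ^ 2⌉₊ (X 0 ω)) := by
        rw [hg]
        simp only []
        rw [min_eq_left (Nat.le_ceil _)]
      rw [this]
      exact le_iSup (fun M : ℕ => ENNReal.ofReal (g M (X 0 ω))) _
    have hC : ENNReal.ofReal (max C 0) < ⨆ M : ℕ, ∫⁻ ω, ENNReal.ofReal (g M (X 0 ω)) ∂ℙ := by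
      rw [hsup]; exact ENNReal.ofReal_lt_top
    obtain ⟨M, hM⟩ := lt_iSup_iff.1 hC
    refine ⟨M, ?_⟩
    have hle : ∫⁻ ω, ENNReal.ofReal (g M (X 0 ω)) ∂ℙ ≤ ENNReal.ofReal (M : ℝ) := by
      calc ∫⁻ ω, ENNReal.ofReal (g M (X 0 ω)) ∂ℙ
          ≤ ∫⁻ _, ENNReal.ofReal (M : ℝ) ∂ℙ :=
            lintegral_mono fun ω => ENNReal.ofReal_le_ofReal (hgle M _)
        _ = ENNReal.ofReal (M : ℝ) := by simp
    have hfin' : ∫⁻ ω, ENNReal.ofReal (g M (X 0 ω)) ∂ℙ ≠ ⊤ :=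
      ne_top_of_le_ne_top ENNReal.ofReal_ne_top hle
    have hrepr : ∫ ω, g M (X 0 ω) ∂ℙ
        = (∫⁻ ω, ENNReal.ofReal (g M (X 0 ω)) ∂ℙ).toReal := by
      rw [integral_eq_lintegral_of_nonneg_ae (ae_of_all _ fun ω => hg0 M _)
        (((hgmeas M).comp (hmeas 0)).aestronglyMeasurable)]
    rw [hrepr]
    calc C ≤ max C 0 := le_max_left _ _
      _ = (ENNReal.ofReal (max C 0)).toReal := by rw [ENNReal.toReal_ofReal (le_max_right _ _)]
      _ < (∫⁻ ω, ENNReal.ofReal (g M (X 0 ω)) ∂ℙ).toReal := by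
          exact (ENNReal.toReal_lt_toReal ENNReal.ofReal_ne_top hfin').2 hM
  -- combine over all M
  have hall : ∀ᵐ ω ∂ℙ, ∀ M : ℕ,
      Tendsto (fun n : ℕ => (∑ i ∈ Finset.range n, g M (X i ω)) / n) atTop
        (𝓝 (∫ ω, g M (X 0 ω) ∂ℙ)) := ae_all_iff.2 hslln
  filter_upwards [hall] with ω hω
  rw [tendsto_atTop]
  intro C
  obtain ⟨M, hM⟩ := hmean C
  have hev : ∀ᶠ n : ℕ in atTop, C < (∑ i ∈ Finset.range n, g M (X i ω)) / n :=
    (hω M).eventually (eventually_gt_nhds hM)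
  filter_upwards [hev] with n hn
  refine le_trans hn.le ?_
  gcongr with i _
  exact min_le_left _ _

/-- for `q > 0`, `a > 1` and an i.i.d. sequence `(Xᵢ)` of positive
random variables with finite positive mean and infinite second moment, the
on/off process whose `i`-th cycle has on-length `Xᵢ` at rate `a` and off-length
`Fᵢ = max((a-1)Xᵢ, (a-1)aXᵢ²/(2q) - Xᵢ)` has time-average arrival rate
`(1/T'_N)∫_0^{T'_N} A = a (Σ_{i<N} Xᵢ)/T'_N`, which tends to zero almost
surely. -/
theorem stmt_15 {Ω : Type*} [MeasureSpace Ω] [IsProbabilityMeasure (ℙ : Measure Ω)]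
    (q a : ℝ) (hq : 0 < q) (ha : 1 < a)
    (X : ℕ → Ω → ℝ) (hmeas : ∀ i, Measurable (X i))
    (hpos : ∀ i ω, 0 < X i ω)
    (hindep : iIndepFun X ℙ)
    (hident : ∀ i, IdentDistrib (X i) (X 0) ℙ ℙ)
    (hint : Integrable (X 0) ℙ)
    (hmean : 0 < ∫ ω, X 0 ω)
    (hsq : ∫⁻ ω, ENNReal.ofReal ((X 0 ω) ^ 2) = ⊤)
    (F : Ω → ℕ → ℝ)
    (hF : ∀ ω i, F ω i = max ((a - 1) * X i ω) ((a - 1) * a * (X i ω) ^ 2 / (2 * q) - X i ω))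
    (T : Ω → ℕ → ℝ) (hT : ∀ ω N, T ω N = ∑ i ∈ Finset.range N, (X i ω + F ω i))
    (A : Ω → ℝ → ℝ)
    (hAon : ∀ ω i, ∀ t, T ω i ≤ t → t < T ω i + X i ω → A ω t = a)
    (hAoff : ∀ ω i, ∀ t, T ω i + X i ω ≤ t → t < T ω (i + 1) → A ω t = 0) :
    (∀ ω, ∀ N, 1 ≤ N →
      (1 / T ω N) * ∫ u in (0:ℝ)..(T ω N), A ω u
        = a * (∑ i ∈ Finset.range N, X i ω) / T ω N) ∧
    ∀ᵐ ω ∂ℙ, Tendsto (fun N => a * (∑ i ∈ Finset.range N, X i ω) / T ω N)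
      atTop (nhds 0) := by
  have hFpos : ∀ ω i, 0 < F ω i := by
    intro ω i
    rw [hF]
    exact lt_max_of_lt_left (by nlinarith [hpos i ω])
  have hTsucc : ∀ ω i, T ω (i + 1) = T ω i + (X i ω + F ω i) := by
    intro ω i
    rw [hT, hT, Finset.sum_range_succ]
  have hT0 : ∀ ω, T ω 0 = 0 := by intro ω; rw [hT]; simp
  -- per-cycle integrability and integral
  have key : ∀ ω i, IntervalIntegrable (A ω) volume (T ω i) (T ω (i + 1)) ∧
      (∫ u in (T ω i)..(T ω (i + 1)), A ω u) = a * X i ω := by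
    intro ω i
    have hX := hpos i ω
    have hFp := hFpos ω i
    have hTs := hTsucc ω i
    have hon := piecewise_const_integral (A ω) a (T ω i) (T ω i + X i ω)
      (by linarith) (hAon ω i)
    have hoff := piecewise_const_integral (A ω) 0 (T ω i + X i ω) (T ω (i + 1))
      (by linarith) (fun t h1 h2 => hAoff ω i t h1 h2)
    refine ⟨hon.1.trans hoff.1, ?_⟩
    rw [← intervalIntegral.integral_add_adjacent_intervals hon.1 hoff.1, hon.2, hoff.2]
    ring
  -- integral over [0, T N]
  have hintegral : ∀ ω N, (∫ u in (0:ℝ)..(T ω N), A ω u)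
      = a * ∑ i ∈ Finset.range N, X i ω := by
    intro ω N
    have := intervalIntegral.sum_integral_adjacent_intervals
      (f := A ω) (μ := volume) (a := T ω) (n := N) (fun k _ => (key ω k).1)
    rw [hT0 ω] at this
    rw [← this, Finset.mul_sum]
    exact Finset.sum_congr rfl fun i _ => (key ω i).2
  constructor
  · intro ω N _
    rw [hintegral, one_div, inv_mul_eq_div]
  -- a.s. convergence
  have hpair : Pairwise (Function.onFun (IndepFun · · ℙ) X) := fun i j hij => hindep.indepFun hij
  have h1 := strong_law_ae_real X hint hpair hident
  have h2 := aux_sq X hmeas hindep hident hsq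
  filter_upwards [h1, h2] with ω hω1 hω2
  set c : ℝ := (a - 1) * a / (2 * q) with hc
  have hcpos : 0 < c := by
    apply div_pos (by nlinarith) (by linarith)
  -- T ω N ≥ c * ∑ Xᵢ²
  have hTge : ∀ N, c * ∑ i ∈ Finset.range N, (X i ω) ^ 2 ≤ T ω N := by
    intro N
    rw [hT, Finset.mul_sum]
    refine Finset.sum_le_sum fun i _ => ?_
    have : (a - 1) * a * (X i ω) ^ 2 / (2 * q) - X i ω ≤ F ω i := by
      rw [hF]; exact le_max_right _ _
    have : c * (X i ω) ^ 2 = (a - 1) * a * (X i ω) ^ 2 / (2 * q) := by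
      rw [hc]; ring
    linarith [hF ω i, le_max_right ((a - 1) * X i ω)
      ((a - 1) * a * (X i ω) ^ 2 / (2 * q) - X i ω)]
  have hTtop : Tendsto (fun N : ℕ => T ω N / N) atTop atTop := by
    have h3 : Tendsto (fun N : ℕ => c * ((∑ i ∈ Finset.range N, (X i ω) ^ 2) / N))
        atTop atTop := hω2.const_mul_atTop hcpos
    refine tendsto_atTop_mono (fun N => ?_) h3
    rcases Nat.eq_zero_or_pos N with h0 | hNp
    · simp [h0]
    · rw [mul_div_assoc']
      exact (div_le_div_iff_of_pos_right (by exact_mod_cast hNp)).2 (hTge N)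
  have hnum : Tendsto (fun N : ℕ => a * ((∑ i ∈ Finset.range N, X i ω) / N)) atTop
      (𝓝 (a * ∫ ω, X 0 ω)) := hω1.const_mul a
  have hmain := hnum.div_atTop hTtop
  refine hmain.congr' ?_
  filter_upwards [eventually_ge_atTop 1] with N hN
  have hNne : (N : ℝ) ≠ 0 := by
    have : 0 < N := hN
    positivity
  have hTpos : 0 < T ω N := by
    rw [hT]
    refine Finset.sum_pos (fun i _ => by linarith [hpos i ω, hFpos ω i]) ?_
    exact Finset.nonempty_range_iff.2 (by omega)
  field_simp
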